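/- Let M be an invertible d×d matrix over K whose entries are rational functions of u_0, u_1, u_2, λ only, and suppose that for all i, j ∈ {1,…,N} one has ∂/∂u^i_0 ( ∂M/∂u^j_2 · M^{-1} ) = 0. Let a_0 ∈ ℂ^N be such that M(a_0,u_1,u_2,λ) is well defined and invertible. Then the matrix M̃ := M(a_0,u_1,u_2,λ)^{-1} · M(u_0,u_1,u_2,λ) · M(a_0,u_0,u_1,λ) has entries that are rational functions of u_0, u_1, λ only (in particular independent of u_2). -/

import Mathlib

/-!
Setup: `KK N` is the field of rational functions over `ℂ` in the commuting
variables `λ` (here `lam N`) and `u^γ_ℓ` (here `uu N γ ℓ`, `γ : Fin N`, `ℓ : ℤ`),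
realized as the fraction field of the multivariate polynomial ring.
`SS N` is the shift automorphism `S` (fixing `ℂ` and `λ`, sending `u^γ_ℓ` to
`u^γ_{ℓ+1}`), and `Sz N ℓ = S^ℓ`.
-/

set_option maxHeartbeats 1000000
set_option synthInstance.maxHeartbeats 1000000

noncomputable section

open MvPolynomial

abbrev RR (N : ℕ) : Type := MvPolynomial (Option (Fin N × ℤ)) ℂ
abbrev KK (N : ℕ) : Type := FractionRing (RR N)

def lam (N : ℕ) : KK N := algebraMap (RR N) (KK N) (X none)
def uu (N : ℕ) (γ : Fin N) (ℓ : ℤ) : KK N := algebraMap (RR N) (KK N) (X (some (γ, ℓ)))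

def shiftIdx (N : ℕ) : Option (Fin N × ℤ) ≃ Option (Fin N × ℤ) :=
  Equiv.optionCongr ((Equiv.refl (Fin N)).prodCongr (Equiv.addRight (1:ℤ)))

/-- The shift on polynomials: `λ ↦ λ`, `u^γ_ℓ ↦ u^γ_{ℓ+1}`. -/
def shiftR (N : ℕ) : RR N ≃+* RR N := (renameEquiv ℂ (shiftIdx N)).toRingEquiv

/-- The shift automorphism `S` of the field `KK N`. -/
def SS (N : ℕ) : RingAut (KK N) := IsFractionRing.ringEquivOfRingEquiv (shiftR N)

/-- `Sz N ℓ = S^ℓ`. -/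
def Sz (N : ℕ) (ℓ : ℤ) : KK N ≃+* KK N := SS N ^ ℓ

/-- The subfield of elements that are rational functions of `λ` and the
variables `u^γ_ℓ` with `ℓ ∈ s` only. -/
def depOn (N : ℕ) (s : Set ℤ) : Subfield (KK N) :=
  Subfield.closure (Set.range (algebraMap ℂ (KK N)) ∪ {lam N} ∪
    {x | ∃ γ : Fin N, ∃ ℓ ∈ s, x = uu N γ ℓ})

/-- The substitution `u^γ_0 := a0 γ` on polynomials (fixing `λ` and all other
variables). -/
def evalAt (N : ℕ) (a0 : Fin N → ℂ) : RR N →+* RR N :=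
  (aeval (fun i : Option (Fin N × ℤ) =>
    match i with
    | none => (X none : RR N)
    | some (γ, ℓ) => if ℓ = 0 then C (a0 γ) else X (some (γ, ℓ)))).toRingHom

/-- `SubstAt N a0 x y` means: the rational function `x` is well defined at
`u_0 = a0` (it has a representation `x = p/q` with `q` not vanishing identically
after the substitution `u_0 := a0`) and its value there is the rational
function `y` of the remaining variables. -/
def SubstAt (N : ℕ) (a0 : Fin N → ℂ) (x y : KK N) : Prop :=
  ∃ p q : RR N, evalAt N a0 q ≠ 0 ∧
    x * algebraMap (RR N) (KK N) q = algebraMap (RR N) (KK N) p ∧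
    y * algebraMap (RR N) (KK N) (evalAt N a0 q) = algebraMap (RR N) (KK N) (evalAt N a0 p)

-- ====== auxiliary development ======

namespace Stmt2Aux

variable {N : ℕ}

lemma algInj (N : ℕ) : Function.Injective (algebraMap (RR N) (KK N)) :=
  IsFractionRing.injective (RR N) (KK N)

lemma alg_ne {q : RR N} (hq : q ≠ 0) : algebraMap (RR N) (KK N) q ≠ 0 := by
  intro h
  exact hq (algInj N (by simpa using h))

/-- The index set of variables of levels in `s`, together with `λ`. -/
def Vs (N : ℕ) (s : Set ℤ) : Set (Option (Fin N × ℤ)) :=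
  {none} ∪ {v | ∃ γ : Fin N, ∃ ℓ ∈ s, v = some (γ, ℓ)}

/-- Elements of `KK N` expressible as quotients of polynomials supported on `W`. -/
def GG (N : ℕ) (W : Set (Option (Fin N × ℤ))) : Set (KK N) :=
  {x | ∃ p q : RR N, q ≠ 0 ∧ p ∈ supported ℂ W ∧ q ∈ supported ℂ W ∧
    x * algebraMap (RR N) (KK N) q = algebraMap (RR N) (KK N) p}

lemma GG_mono {W W' : Set (Option (Fin N × ℤ))} (h : W ⊆ W') : GG N W ⊆ GG N W' := by
  rintro x ⟨p, q, hq, hp1, hq1, hx⟩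
  exact ⟨p, q, hq, supported_mono h hp1, supported_mono h hq1, hx⟩

lemma alg_mem_GG {W : Set (Option (Fin N × ℤ))} {r : RR N} (hr : r ∈ supported ℂ W) :
    algebraMap (RR N) (KK N) r ∈ GG N W :=
  ⟨r, 1, one_ne_zero, hr, (supported ℂ W).one_mem, by simp⟩

/-- `GG N W` as a subfield. -/
def GGf (N : ℕ) (W : Set (Option (Fin N × ℤ))) : Subfield (KK N) where
  carrier := GG N W
  one_mem' := by simpa using alg_mem_GG (supported ℂ W).one_mem
  zero_mem' := by simpa using alg_mem_GG (W := W) (supported ℂ W).zero_mem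
  mul_mem' := by
    rintro x y ⟨p, q, hq, hp1, hq1, hx⟩ ⟨p', q', hq', hp1', hq1', hy⟩
    refine ⟨p * p', q * q', mul_ne_zero hq hq', mul_mem hp1 hp1', mul_mem hq1 hq1', ?_⟩
    rw [map_mul, map_mul, ← hx, ← hy]; ring
  add_mem' := by
    rintro x y ⟨p, q, hq, hp1, hq1, hx⟩ ⟨p', q', hq', hp1', hq1', hy⟩
    refine ⟨p * q' + p' * q, q * q', mul_ne_zero hq hq',
      add_mem (mul_mem hp1 hq1') (mul_mem hp1' hq1), mul_mem hq1 hq1', ?_⟩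
    rw [map_add, map_mul, map_mul, map_mul, ← hx, ← hy]; ring
  neg_mem' := by
    rintro x ⟨p, q, hq, hp1, hq1, hx⟩
    refine ⟨-p, q, hq, neg_mem hp1, hq1, ?_⟩
    rw [map_neg, ← hx]; ring
  inv_mem' := by
    rintro x ⟨p, q, hq, hp1, hq1, hx⟩
    rcases eq_or_ne x 0 with rfl | hx0
    · exact ⟨0, 1, one_ne_zero, (supported ℂ W).zero_mem, (supported ℂ W).one_mem, by simp⟩
    · have hp : p ≠ 0 := by
        rintro rfl
        simp only [map_zero] at hx
        exact hx0 (by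
          have := mul_eq_zero.mp hx
          rcases this with h | h
          · exact h
          · exact absurd h (alg_ne hq))
      refine ⟨q, p, hp, hq1, hp1, ?_⟩
      rw [inv_mul_eq_iff_eq_mul₀ hx0]
      exact hx.symm

lemma mem_GGf_iff {W : Set (Option (Fin N × ℤ))} {x : KK N} : x ∈ GGf N W ↔ x ∈ GG N W :=
  Iff.rfl

lemma algC_eq (c : ℂ) : algebraMap ℂ (KK N) c = algebraMap (RR N) (KK N) (C c) := by
  rw [IsScalarTower.algebraMap_apply ℂ (RR N) (KK N)]
  rfl

lemma depOn_le_GGf (s : Set ℤ) : depOn N s ≤ GGf N (Vs N s) := by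
  apply Subfield.closure_le.mpr
  rintro x (hx | hx)
  · rcases hx with ⟨c, rfl⟩ | hx
    · rw [algC_eq]
      exact alg_mem_GG (Subalgebra.algebraMap_mem _ c)
    · simp only [Set.mem_singleton_iff] at hx
      subst hx
      exact alg_mem_GG (by
        rw [X_mem_supported (R := ℂ)]
        exact Or.inl rfl)
  · obtain ⟨γ, ℓ, hℓ, rfl⟩ := hx
    exact alg_mem_GG (by
      rw [X_mem_supported (R := ℂ)]
      exact Or.inr ⟨γ, ℓ, hℓ, rfl⟩)

lemma alg_supported_mem_depOn {s : Set ℤ} {r : RR N} (hr : r ∈ supported ℂ (Vs N s)) :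
    algebraMap (RR N) (KK N) r ∈ depOn N s := by
  rw [supported_eq_adjoin_X] at hr
  induction hr using Algebra.adjoin_induction with
  | mem x hx =>
      obtain ⟨v, hv, rfl⟩ := hx
      rcases hv with hv | hv
      · simp only [Set.mem_singleton_iff] at hv; subst hv
        exact Subfield.subset_closure (Or.inl (Or.inr rfl))
      · obtain ⟨γ, ℓ, hℓ, rfl⟩ := hv
        exact Subfield.subset_closure (Or.inr ⟨γ, ℓ, hℓ, rfl⟩)
  | algebraMap c =>
      have : (algebraMap ℂ (RR N)) c = C c := by rw [MvPolynomial.algebraMap_eq]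
      rw [this, ← algC_eq]
      exact Subfield.subset_closure (Or.inl (Or.inl ⟨c, rfl⟩))
  | add x y _ _ hx hy => rw [map_add]; exact add_mem hx hy
  | mul x y _ _ hx hy => rw [map_mul]; exact mul_mem hx hy

lemma GG_le_depOn {s : Set ℤ} {x : KK N} (hx : x ∈ GG N (Vs N s)) : x ∈ depOn N s := by
  obtain ⟨p, q, hq, hp1, hq1, hxe⟩ := hx
  have hx' : x = algebraMap (RR N) (KK N) p / algebraMap (RR N) (KK N) q := by
    field_simp [alg_ne hq]
    exact hxe
  rw [hx']
  exact div_mem (alg_supported_mem_depOn hp1) (alg_supported_mem_depOn hq1)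

-- ====== single-variable machinery ======

/-- The remaining variables after removing `v`. -/
abbrev tauv (N : ℕ) (v : Option (Fin N × ℤ)) : Type := {w : Option (Fin N × ℤ) // w ≠ v}

abbrev BB (N : ℕ) (v : Option (Fin N × ℤ)) : Type := MvPolynomial (tauv N v) ℂ

/-- Viewing `RR N` as polynomials in the single variable `v`. -/
def Phi (N : ℕ) (v : Option (Fin N × ℤ)) : RR N ≃ₐ[ℂ] Polynomial (BB N v) :=
  (renameEquiv ℂ (Equiv.optionSubtypeNe v).symm).trans (optionEquivLeft ℂ (tauv N v))

lemma Phi_X_self (v : Option (Fin N × ℤ)) : Phi N v (X v) = Polynomial.X := by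
  simp only [Phi, AlgEquiv.trans_apply, renameEquiv_apply, rename_X]
  rw [Equiv.optionSubtypeNe_symm_self, optionEquivLeft_X_none]

lemma Phi_X_ne (v : Option (Fin N × ℤ)) {w : Option (Fin N × ℤ)} (h : w ≠ v) :
    Phi N v (X w) = Polynomial.C (X ⟨w, h⟩) := by
  simp only [Phi, AlgEquiv.trans_apply, renameEquiv_apply, rename_X]
  rw [Equiv.optionSubtypeNe_symm_of_ne h, optionEquivLeft_X_some]

lemma Phi_C (v : Option (Fin N × ℤ)) (c : ℂ) : Phi N v (C c) = Polynomial.C (C c) := by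
  simp only [Phi, AlgEquiv.trans_apply, renameEquiv_apply, rename_C]
  rw [optionEquivLeft_C]

lemma Phi_rename (v : Option (Fin N × ℤ)) (c : BB N v) :
    Phi N v (rename Subtype.val c) = Polynomial.C c := by
  have : (Phi N v).toAlgHom.comp (rename (Subtype.val : tauv N v → Option (Fin N × ℤ)))
      = Polynomial.CAlgHom := by
    apply algHom_ext
    intro w
    simp only [AlgHom.comp_apply, rename_X, AlgEquiv.toAlgHom_eq_coe, AlgHom.coe_coe,
      Polynomial.CAlgHom]
    erw [Phi_X_ne v w.2]
    rfl
  have := congrArg (fun f => f c) (congrArg DFunLike.coe this)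
  simpa using this

lemma Phi_symm_C (v : Option (Fin N × ℤ)) (c : BB N v) :
    (Phi N v).symm (Polynomial.C c) = rename Subtype.val c := by
  rw [← Phi_rename v c, AlgEquiv.symm_apply_apply]

lemma Phi_pderiv (v : Option (Fin N × ℤ)) (r : RR N) :
    Phi N v (pderiv v r) = Polynomial.derivative (Phi N v r) := by
  induction r using MvPolynomial.induction_on with
  | C c => simp [Phi_C]
  | add p q hp hq => simp [map_add, hp, hq]
  | mul_X p w hp =>
      rw [pderiv_mul, map_add, map_mul, map_mul, hp, map_mul, Polynomial.derivative_mul]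
      rcases eq_or_ne w v with rfl | hwv
      · rw [pderiv_X_self, Phi_X_self, Polynomial.derivative_X, map_one]
      · rw [pderiv_X_of_ne hwv, Phi_X_ne v hwv, Polynomial.derivative_C, map_zero]

lemma Phi_coeff_supported (v : Option (Fin N × ℤ)) {U : Set (Option (Fin N × ℤ))} {r : RR N}
    (hr : r ∈ supported ℂ U) (i : ℕ) :
    (Phi N v r).coeff i ∈ supported ℂ {w : tauv N v | ↑w ∈ U} := by
  rw [supported_eq_adjoin_X] at hr
  induction hr using Algebra.adjoin_induction generalizing i with
  | mem x hx =>
      obtain ⟨w, hw, rfl⟩ := hx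
      rcases eq_or_ne w v with rfl | hwv
      · rw [Phi_X_self]
        rw [Polynomial.coeff_X]
        split
        · exact Subalgebra.one_mem _
        · exact Subalgebra.zero_mem _
      · rw [Phi_X_ne v hwv, Polynomial.coeff_C]
        split
        · rw [X_mem_supported (R := ℂ)]
          exact hw
        · exact Subalgebra.zero_mem _
  | algebraMap c =>
      have : (algebraMap ℂ (RR N)) c = C c := by rw [MvPolynomial.algebraMap_eq]
      rw [this, Phi_C, Polynomial.coeff_C]
      split
      · exact Subalgebra.algebraMap_mem _ c
      · exact Subalgebra.zero_mem _
  | add x y _ _ hx hy =>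
      rw [map_add, Polynomial.coeff_add]
      exact add_mem (hx i) (hy i)
  | mul x y _ _ hx hy =>
      rw [map_mul, Polynomial.coeff_mul]
      exact sum_mem fun c _ => mul_mem (hx c.1) (hy c.2)

lemma Phi_symm_C_supported (v : Option (Fin N × ℤ)) {U : Set (Option (Fin N × ℤ))} {c : BB N v}
    (hc : c ∈ supported ℂ {w : tauv N v | ↑w ∈ U}) :
    (Phi N v).symm (Polynomial.C c) ∈ supported ℂ (U \ {v}) := by
  rw [Phi_symm_C]
  rw [mem_supported] at hc ⊢
  refine subset_trans (Finset.coe_subset.mpr (vars_rename _ _)) ?_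
  intro w hw
  simp only [Finset.coe_image, Set.mem_image] at hw
  obtain ⟨w', hw', rfl⟩ := hw
  exact ⟨hc hw', w'.2⟩

/-- A polynomial not involving `v` maps to a constant under `Phi`. -/
lemma Phi_eq_C_of_supported (v : Option (Fin N × ℤ)) {r : RR N}
    (hr : r ∈ supported ℂ ({v}ᶜ : Set (Option (Fin N × ℤ)))) :
    ∃ e : BB N v, Phi N v r = Polynomial.C e := by
  rw [mem_supported] at hr
  have hsub : ↑r.vars ⊆ Set.range (Subtype.val : tauv N v → Option (Fin N × ℤ)) := by
    intro w hw
    exact ⟨⟨w, hr hw⟩, rfl⟩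
  obtain ⟨r₀, rfl⟩ := exists_rename_eq_of_vars_subset_range r Subtype.val Subtype.val_injective hsub
  exact ⟨r₀, Phi_rename v r₀⟩

lemma supported_of_Phi_eq_C (v : Option (Fin N × ℤ)) {r : RR N} {e : BB N v}
    (h : Phi N v r = Polynomial.C e) : r ∈ supported ℂ ({v}ᶜ : Set (Option (Fin N × ℤ))) := by
  have : r = rename Subtype.val e := by
    rw [← Phi_symm_C v e, ← h, AlgEquiv.symm_apply_apply]
  rw [this, mem_supported]
  refine subset_trans (Finset.coe_subset.mpr (vars_rename _ _)) ?_
  intro w hw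
  simp only [Finset.coe_image, Set.mem_image] at hw
  obtain ⟨w', _, rfl⟩ := hw
  exact w'.2

/-- A divisor of a nonzero polynomial supported on `U` is supported on `U`. -/
lemma supported_of_dvd {a b : RR N} {U : Set (Option (Fin N × ℤ))} (h : a ∣ b) (hb : b ≠ 0)
    (hbU : b ∈ supported ℂ U) : a ∈ supported ℂ U := by
  rw [mem_supported] at hbU ⊢
  intro w hwa
  by_contra hwU
  obtain ⟨c, rfl⟩ := h
  have ha : a ≠ 0 := fun h0 => hb (by rw [h0, zero_mul])
  have hc : c ≠ 0 := fun h0 => hb (by rw [h0, mul_zero])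
  have hbv : a * c ∈ supported ℂ ({w}ᶜ : Set (Option (Fin N × ℤ))) := by
    rw [mem_supported]
    intro w' hw'
    exact fun hww : w' ∈ ({w} : Set _) => hwU (by rw [← hww]; exact hbU hw')
  obtain ⟨e, he⟩ := Phi_eq_C_of_supported w hbv
  have hane : Phi N w a ≠ 0 := fun h0 => ha ((map_eq_zero_iff _ (Phi N w).injective).mp h0)
  have hcne : Phi N w c ≠ 0 := fun h0 => hc ((map_eq_zero_iff _ (Phi N w).injective).mp h0)
  have hdeg : (Phi N w a).natDegree + (Phi N w c).natDegree = 0 := by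
    rw [← Polynomial.natDegree_mul hane hcne, ← map_mul, he, Polynomial.natDegree_C]
  have : (Phi N w a).natDegree = 0 := Nat.eq_zero_of_add_eq_zero_right hdeg
  obtain ⟨e', he'⟩ := Polynomial.natDegree_eq_zero.mp this
  have := supported_of_Phi_eq_C w he'.symm
  rw [mem_supported] at this
  exact (this hwa) rfl

-- ====== the one-variable descent ======

/-- Coefficients of two polynomials with proportional logarithmic derivatives are
proportional (char 0). -/
lemma constRatio {F : Type*} [Field F] [CharZero F] {P Q : Polynomial F} (hP : P ≠ 0)
    (hQ : Q ≠ 0) (h : Q * Polynomial.derivative P = P * Polynomial.derivative Q) (i j : ℕ) :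
    P.coeff i * Q.coeff j = P.coeff j * Q.coeff i := by
  obtain ⟨P₁, Q₁, G, rel, hPg, hQg⟩ := UniqueFactorizationMonoid.exists_reduced_factors' P Q hQ
  have hG : G ≠ 0 := fun h0 => hQ (by rw [← hQg, h0, zero_mul])
  have hP₁ : P₁ ≠ 0 := fun h0 => hP (by rw [← hPg, h0, mul_zero])
  have hQ₁ : Q₁ ≠ 0 := fun h0 => hQ (by rw [← hQg, h0, mul_zero])
  have key : Q₁ * Polynomial.derivative P₁ = P₁ * Polynomial.derivative Q₁ := by
    have h2 : G ^ 2 * (Q₁ * Polynomial.derivative P₁) =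
        G ^ 2 * (P₁ * Polynomial.derivative Q₁) := by
      rw [← hPg, ← hQg] at h
      rw [Polynomial.derivative_mul, Polynomial.derivative_mul] at h
      ring_nf
      ring_nf at h
      linear_combination h
    exact mul_left_cancel₀ (pow_ne_zero 2 hG) h2
  have hQder : Polynomial.derivative Q₁ = 0 := by
    rcases eq_or_ne Q₁.natDegree 0 with h0 | h0
    · obtain ⟨a, ha⟩ := Polynomial.natDegree_eq_zero.mp h0
      rw [← ha, Polynomial.derivative_C]
    · by_contra hne
      have hdvd : Q₁ ∣ Polynomial.derivative Q₁ :=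
        rel.symm.dvd_of_dvd_mul_left ⟨Polynomial.derivative P₁, key.symm⟩
      have h1 := Polynomial.natDegree_le_of_dvd hdvd hne
      have h2 := Polynomial.natDegree_derivative_lt h0
      omega
  have hPder : Polynomial.derivative P₁ = 0 := by
    have : Q₁ * Polynomial.derivative P₁ = 0 := by rw [key, hQder, mul_zero]
    exact (mul_eq_zero.mp this).resolve_left hQ₁
  obtain ⟨a, ha⟩ := Polynomial.natDegree_eq_zero.mp
    (Polynomial.natDegree_eq_zero_of_derivative_eq_zero hQder)
  obtain ⟨b, hb⟩ := Polynomial.natDegree_eq_zero.mp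
    (Polynomial.natDegree_eq_zero_of_derivative_eq_zero hPder)
  have hPe : P = G * Polynomial.C b := by rw [← hPg, hb]
  have hQe : Q = G * Polynomial.C a := by rw [← hQg, ha]
  rw [hPe, hQe]
  simp only [Polynomial.coeff_mul_C]
  ring

/-- Descent step: if `q * ∂ᵥp = p * ∂ᵥq` then `p/q` can be written with numerator and
denominator not involving `v`. -/
lemma ratDescent (v : Option (Fin N × ℤ)) {U : Set (Option (Fin N × ℤ))} {p q : RR N}
    (hq : q ≠ 0) (hp1 : p ∈ supported ℂ U) (hq1 : q ∈ supported ℂ U)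
    (hder : q * pderiv v p = p * pderiv v q) :
    ∃ c d : RR N, d ≠ 0 ∧ c ∈ supported ℂ (U \ {v}) ∧ d ∈ supported ℂ (U \ {v}) ∧
      c * q = d * p := by
  rcases eq_or_ne p 0 with rfl | hp
  · exact ⟨0, 1, one_ne_zero, Subalgebra.zero_mem _, Subalgebra.one_mem _, by simp⟩
  set B := BB N v
  set L := FractionRing B
  haveI : CharZero B := charZero_of_injective_algebraMap
    (show Function.Injective (algebraMap ℂ B) by
      rw [MvPolynomial.algebraMap_eq]; exact C_injective _ _)
  haveI : CharZero L := charZero_of_injective_algebraMap (IsFractionRing.injective B L)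
  set P := Phi N v p with hPdef
  set Q := Phi N v q with hQdef
  have hPne : P ≠ 0 := fun h0 => hp ((map_eq_zero_iff _ (Phi N v).injective).mp h0)
  have hQne : Q ≠ 0 := fun h0 => hq ((map_eq_zero_iff _ (Phi N v).injective).mp h0)
  have hPQ : Q * Polynomial.derivative P = P * Polynomial.derivative Q := by
    have := congrArg (Phi N v) hder
    rw [map_mul, map_mul, Phi_pderiv, Phi_pderiv] at this
    exact this
  have hBL : Function.Injective (algebraMap B L) := IsFractionRing.injective B L
  set Ph := P.map (algebraMap B L)
  set Qh := Q.map (algebraMap B L)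
  have hPh : Ph ≠ 0 := fun h0 => hPne ((Polynomial.map_eq_zero_iff hBL).mp h0)
  have hQh : Qh ≠ 0 := fun h0 => hQne ((Polynomial.map_eq_zero_iff hBL).mp h0)
  have hPQh : Qh * Polynomial.derivative Ph = Ph * Polynomial.derivative Qh := by
    simp only [Ph, Qh, Polynomial.derivative_map, ← Polynomial.map_mul]
    rw [hPQ]
  have hco : ∀ i j : ℕ, P.coeff i * Q.coeff j = P.coeff j * Q.coeff i := by
    intro i j
    apply hBL
    have := constRatio hPh hQh hPQh i j
    simpa only [Ph, Qh, Polynomial.coeff_map, ← map_mul] using this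
  set k := Q.natDegree
  have hdB : Q.coeff k ≠ 0 := Polynomial.leadingCoeff_ne_zero.mpr hQne
  set cB := P.coeff k
  set dB := Q.coeff k
  have hCQ : Polynomial.C cB * Q = Polynomial.C dB * P := by
    apply Polynomial.ext
    intro i
    rw [Polynomial.coeff_C_mul, Polynomial.coeff_C_mul]
    linear_combination hco k i
  refine ⟨(Phi N v).symm (Polynomial.C cB), (Phi N v).symm (Polynomial.C dB), ?_, ?_, ?_, ?_⟩
  · intro h0
    have : (Polynomial.C dB : Polynomial B) = 0 := by
      have := congrArg (Phi N v) h0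
      rwa [AlgEquiv.apply_symm_apply, map_zero] at this
    exact hdB (by simpa using this)
  · exact Phi_symm_C_supported v (Phi_coeff_supported v hp1 k)
  · exact Phi_symm_C_supported v (Phi_coeff_supported v hq1 k)
  · apply (Phi N v).injective
    rw [map_mul, map_mul, AlgEquiv.apply_symm_apply, AlgEquiv.apply_symm_apply]
    exact hCQ

/-- Removing a variable from the support of an element killed by the corresponding
partial derivative. -/
lemma kernelStep {U : Set (Option (Fin N × ℤ))} {x : KK N} (v : Option (Fin N × ℤ))
    (D : Derivation ℂ (KK N) (KK N))
    (hD : ∀ r : RR N, D (algebraMap (RR N) (KK N) r) = algebraMap (RR N) (KK N) (pderiv v r))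
    (hx : x ∈ GG N U) (hDx : D x = 0) : x ∈ GG N (U \ {v}) := by
  obtain ⟨p, q, hq, hp1, hq1, hxe⟩ := hx
  have h1 : D (x * algebraMap (RR N) (KK N) q) = D (algebraMap (RR N) (KK N) p) :=
    congrArg D hxe
  rw [Derivation.leibniz, hDx, hD, hD] at h1
  simp only [smul_eq_mul, mul_zero, add_zero] at h1
  -- h1 : x * alg (pderiv v q) = alg (pderiv v p)
  have h2 : algebraMap (RR N) (KK N) (q * pderiv v p) = algebraMap (RR N) (KK N) (p * pderiv v q) := by
    rw [map_mul, map_mul, ← h1, ← hxe]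
    ring
  have hder : q * pderiv v p = p * pderiv v q := algInj N h2
  obtain ⟨c, d, hd, hc1, hd1, hcd⟩ := ratDescent v hq hp1 hq1 hder
  refine ⟨c, d, hd, hc1, hd1, ?_⟩
  have h3 : algebraMap (RR N) (KK N) c * algebraMap (RR N) (KK N) q =
      x * algebraMap (RR N) (KK N) d * algebraMap (RR N) (KK N) q := by
    rw [← map_mul, hcd, map_mul, ← hxe]
    ring
  have := mul_right_cancel₀ (alg_ne hq) h3
  rw [← this]

-- ====== compatibility of the given derivations with `pderiv` ======

lemma pdCompat (Pd : Fin N → ℤ → Derivation ℂ (KK N) (KK N))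
    (hPdlam : ∀ i ℓ, Pd i ℓ (lam N) = 0)
    (hPdu : ∀ i ℓ γ m, Pd i ℓ (uu N γ m) = if γ = i ∧ m = ℓ then 1 else 0)
    (i : Fin N) (ℓ : ℤ) (r : RR N) :
    Pd i ℓ (algebraMap (RR N) (KK N) r) =
      algebraMap (RR N) (KK N) (pderiv (some (i, ℓ)) r) := by
  induction r using MvPolynomial.induction_on with
  | C c =>
      have : (C c : RR N) = algebraMap ℂ (RR N) c := by rw [MvPolynomial.algebraMap_eq]
      rw [pderiv_C, map_zero, this, ← IsScalarTower.algebraMap_apply ℂ (RR N) (KK N),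
        Derivation.map_algebraMap]
  | add p q hp hq =>
      simp only [map_add, hp, hq]
  | mul_X p w hp =>
      rw [map_mul, Derivation.leibniz, hp, pderiv_mul, map_add, map_mul, map_mul]
      have hXw : Pd i ℓ (algebraMap (RR N) (KK N) (X w)) =
          algebraMap (RR N) (KK N) (pderiv (some (i, ℓ)) (X w)) := by
        match w with
        | none =>
            have h1 : algebraMap (RR N) (KK N) (X none) = lam N := rfl
            rw [h1, hPdlam, pderiv_X_of_ne (by simp), map_zero]
        | some (γ, m) =>
            have h1 : algebraMap (RR N) (KK N) (X (some (γ, m))) = uu N γ m := rfl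
            rw [h1, hPdu]
            by_cases h : γ = i ∧ m = ℓ
            · obtain ⟨rfl, rfl⟩ := h
              rw [if_pos ⟨rfl, rfl⟩, pderiv_X_self, map_one]
            · rw [if_neg h, pderiv_X_of_ne, map_zero]
              intro hc
              injection hc with hc'
              exact h ⟨congrArg Prod.fst hc', congrArg Prod.snd hc'⟩
      rw [hXw]
      simp only [smul_eq_mul]
      ring

/-- The set of level-`ℓ₀` variables indexed by `T`. -/
def Lvl (N : ℕ) (ℓ₀ : ℤ) (T : Finset (Fin N)) : Set (Option (Fin N × ℤ)) :=
  {w | ∃ i ∈ T, w = some (i, ℓ₀)}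

lemma kernelIter (Pd : Fin N → ℤ → Derivation ℂ (KK N) (KK N))
    (hPdlam : ∀ i ℓ, Pd i ℓ (lam N) = 0)
    (hPdu : ∀ i ℓ γ m, Pd i ℓ (uu N γ m) = if γ = i ∧ m = ℓ then 1 else 0)
    (ℓ₀ : ℤ) {U : Set (Option (Fin N × ℤ))} {x : KK N} (hx : x ∈ GG N U)
    (hDx : ∀ i : Fin N, Pd i ℓ₀ x = 0) (T : Finset (Fin N)) :
    x ∈ GG N (U \ Lvl N ℓ₀ T) := by
  classical
  induction T using Finset.induction_on with
  | empty =>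
      have : U \ Lvl N ℓ₀ ∅ = U := by
        ext w; simp [Lvl]
      rwa [this]
  | @insert i T hiT ih =>
      have hstep := kernelStep (some (i, ℓ₀)) (Pd i ℓ₀)
        (pdCompat Pd hPdlam hPdu i ℓ₀) ih (hDx i)
      have : (U \ Lvl N ℓ₀ T) \ {some (i, ℓ₀)} = U \ Lvl N ℓ₀ (insert i T) := by
        ext w
        simp only [Set.mem_diff, Set.mem_singleton_iff, Lvl, Set.mem_setOf_eq,
          Finset.mem_insert]
        constructor
        · rintro ⟨⟨hw, hT⟩, hne⟩
          exact ⟨hw, by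
            rintro ⟨j, hj | hj, rfl⟩
            · exact hne (by rw [hj])
            · exact hT ⟨j, hj, rfl⟩⟩
        · rintro ⟨hw, hT⟩
          refine ⟨⟨hw, fun ⟨j, hj, hwj⟩ => hT ⟨j, Or.inr hj, hwj⟩⟩, fun h => hT ⟨i, Or.inl rfl, h⟩⟩
      rwa [this] at hstep

lemma none_mem_Vs {s : Set ℤ} : (none : Option (Fin N × ℤ)) ∈ Vs N s := Or.inl rfl

lemma some_mem_Vs {s : Set ℤ} {γ : Fin N} {ℓ : ℤ} : some (γ, ℓ) ∈ Vs N s ↔ ℓ ∈ s := by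
  constructor
  · rintro (h | ⟨γ', ℓ', hℓ', h⟩)
    · exact absurd h (by simp [Set.mem_singleton_iff])
    · injection h with h'
      have h2 : ℓ = ℓ' := congrArg Prod.snd h'
      rw [h2]
      exact hℓ'
  · intro h
    exact Or.inr ⟨γ, ℓ, h, rfl⟩

lemma Vs_diff (s : Set ℤ) (ℓ₀ : ℤ) :
    Vs N s \ Lvl N ℓ₀ Finset.univ = Vs N (s \ {ℓ₀}) := by
  ext w
  match w with
  | none =>
      simp only [Set.mem_diff, Lvl, Set.mem_setOf_eq]
      constructor
      · rintro ⟨-, -⟩; exact none_mem_Vs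
      · intro h
        exact ⟨none_mem_Vs, by rintro ⟨i, -, h⟩; exact nomatch h⟩
  | some (γ, ℓ) =>
      simp only [Set.mem_diff, Lvl, Set.mem_setOf_eq, some_mem_Vs, Set.mem_diff,
        Set.mem_singleton_iff]
      constructor
      · rintro ⟨h1, h2⟩
        refine ⟨h1, fun hℓ => h2 ⟨γ, Finset.mem_univ γ, by rw [hℓ]⟩⟩
      · rintro ⟨h1, h2⟩
        refine ⟨h1, ?_⟩
        rintro ⟨i, -, h⟩
        injection h with h'
        exact h2 (congrArg Prod.snd h')

-- ====== shift transfer ======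

lemma SS_alg (r : RR N) : SS N (algebraMap (RR N) (KK N) r) =
    algebraMap (RR N) (KK N) (shiftR N r) :=
  IsFractionRing.ringEquivOfRingEquiv_algebraMap (shiftR N) r

lemma SS_symm_alg (r : RR N) : (SS N).symm (algebraMap (RR N) (KK N) r) =
    algebraMap (RR N) (KK N) ((shiftR N).symm r) := by
  apply (SS N).injective
  rw [RingEquiv.apply_symm_apply, SS_alg, RingEquiv.apply_symm_apply]

lemma Sz_neg_one (x : KK N) : Sz N (-1) x = (SS N).symm x := by
  have : Sz N (-1) = (SS N)⁻¹ := zpow_neg_one (SS N)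
  rw [this]
  rfl

lemma shiftIdx_symm_mem {w : Option (Fin N × ℤ)} (hw : w ∈ Vs N {1, 2}) :
    (shiftIdx N).symm w ∈ Vs N {0, 1} := by
  match w with
  | none => exact none_mem_Vs
  | some (γ, ℓ) =>
      have hℓ : ℓ ∈ ({1, 2} : Set ℤ) := some_mem_Vs.mp hw
      have : (shiftIdx N).symm (some (γ, ℓ)) = some (γ, ℓ - 1) := by
        simp [shiftIdx, Equiv.optionCongr]
        rfl
      rw [this, some_mem_Vs]
      rcases hℓ with rfl | hℓ
      · exact Or.inl (by norm_num)
      · simp only [Set.mem_singleton_iff] at hℓ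
        exact Or.inr (by simp [hℓ])

lemma shiftR_symm_apply (r : RR N) : (shiftR N).symm r = rename (⇑(shiftIdx N).symm) r := by
  have : (shiftR N).symm = (renameEquiv ℂ (shiftIdx N).symm).toRingEquiv := by
    rw [shiftR, ← renameEquiv_symm]
    rfl
  rw [this]
  rfl

lemma Sz_neg_one_mem_GG {x : KK N} (hx : x ∈ GG N (Vs N {1, 2})) :
    Sz N (-1) x ∈ GG N (Vs N {0, 1}) := by
  obtain ⟨p, q, hq, hp1, hq1, hxe⟩ := hx
  rw [Sz_neg_one]
  refine ⟨(shiftR N).symm p, (shiftR N).symm q, ?_, ?_, ?_, ?_⟩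
  · intro h0
    exact hq (by simpa using congrArg (shiftR N) (h0.trans (map_zero (shiftR N).symm).symm))
  · rw [shiftR_symm_apply, mem_supported]
    refine subset_trans (Finset.coe_subset.mpr (vars_rename _ _)) ?_
    rintro w hw
    simp only [Finset.coe_image, Set.mem_image] at hw
    obtain ⟨w', hw', rfl⟩ := hw
    exact shiftIdx_symm_mem (mem_supported.mp hp1 hw')
  · rw [shiftR_symm_apply, mem_supported]
    refine subset_trans (Finset.coe_subset.mpr (vars_rename _ _)) ?_
    rintro w hw
    simp only [Finset.coe_image, Set.mem_image] at hw
    obtain ⟨w', hw', rfl⟩ := hw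
    exact shiftIdx_symm_mem (mem_supported.mp hq1 hw')
  · have := congrArg (SS N).symm hxe
    rw [map_mul, SS_symm_alg, SS_symm_alg] at this
    exact this

-- ====== evaluation at `u_0 = a0` ======

section EvalAt

variable (a0 : Fin N → ℂ)

/-- The level-0 variables. -/
def L0 (N : ℕ) : Set (Option (Fin N × ℤ)) := Lvl N 0 Finset.univ

lemma none_not_mem_L0 : (none : Option (Fin N × ℤ)) ∉ L0 N := by
  rintro ⟨i, -, h⟩
  exact nomatch h

lemma some_mem_L0 {γ : Fin N} {ℓ : ℤ} : some (γ, ℓ) ∈ L0 N ↔ ℓ = 0 := by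
  constructor
  · rintro ⟨i, -, h⟩
    injection h with h'
    exact congrArg Prod.snd h'
  · rintro rfl
    exact ⟨γ, Finset.mem_univ γ, rfl⟩

lemma evalAt_X_none : evalAt N a0 (X none) = X none := by
  simp [evalAt]

lemma evalAt_X_some (γ : Fin N) (ℓ : ℤ) :
    evalAt N a0 (X (some (γ, ℓ))) = if ℓ = 0 then C (a0 γ) else X (some (γ, ℓ)) := by
  simp [evalAt]

lemma evalAt_C (c : ℂ) : evalAt N a0 (C c) = C c := by
  have h1 : (C c : RR N) = algebraMap ℂ (RR N) c := by rw [MvPolynomial.algebraMap_eq]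
  rw [h1]
  simp [evalAt]

lemma evalAt_supported {U : Set (Option (Fin N × ℤ))} {r : RR N} (hr : r ∈ supported ℂ U) :
    evalAt N a0 r ∈ supported ℂ (U \ L0 N) := by
  rw [supported_eq_adjoin_X] at hr
  induction hr using Algebra.adjoin_induction with
  | mem x hx =>
      obtain ⟨w, hw, rfl⟩ := hx
      match w with
      | none =>
          rw [evalAt_X_none]
          rw [X_mem_supported (R := ℂ)]
          exact ⟨hw, none_not_mem_L0⟩
      | some (γ, ℓ) =>
          rw [evalAt_X_some]
          split
          · have : (C (a0 γ) : RR N) = algebraMap ℂ (RR N) (a0 γ) := by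
              rw [MvPolynomial.algebraMap_eq]
            rw [this]
            exact Subalgebra.algebraMap_mem _ _
          · rw [X_mem_supported (R := ℂ)]
            exact ⟨hw, fun hc => (by assumption : ¬ ℓ = 0) (some_mem_L0.mp hc)⟩
  | algebraMap c =>
      have h1 : (algebraMap ℂ (RR N)) c = C c := by rw [MvPolynomial.algebraMap_eq]
      rw [h1, evalAt_C]
      have : (C c : RR N) = algebraMap ℂ (RR N) c := by rw [MvPolynomial.algebraMap_eq]
      rw [this]
      exact Subalgebra.algebraMap_mem _ _
  | add x y _ _ hx hy => rw [map_add]; exact add_mem hx hy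
  | mul x y _ _ hx hy => rw [map_mul]; exact mul_mem hx hy

lemma evalAt_mem_supported (r : RR N) : evalAt N a0 r ∈ supported ℂ (Set.univ \ L0 N) := by
  apply evalAt_supported
  rw [supported_univ]
  exact Algebra.mem_top

lemma evalAt_fixed {U : Set (Option (Fin N × ℤ))} (hU : ∀ w ∈ U, w ∉ L0 N) {r : RR N}
    (hr : r ∈ supported ℂ U) : evalAt N a0 r = r := by
  rw [supported_eq_adjoin_X] at hr
  induction hr using Algebra.adjoin_induction with
  | mem x hx =>
      obtain ⟨w, hw, rfl⟩ := hx
      match w with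
      | none => exact evalAt_X_none a0
      | some (γ, ℓ) =>
          rw [evalAt_X_some]
          rw [if_neg]
          intro h0
          exact hU _ hw (some_mem_L0.mpr h0)
  | algebraMap c =>
      have h1 : (algebraMap ℂ (RR N)) c = C c := by rw [MvPolynomial.algebraMap_eq]
      rw [h1, evalAt_C]
  | add x y _ _ hx hy => rw [map_add, hx, hy]
  | mul x y _ _ hx hy => rw [map_mul, hx, hy]

lemma evalAt_pderiv {i : Fin N} {ℓ : ℤ} (hℓ : ℓ ≠ 0) (r : RR N) :
    evalAt N a0 (pderiv (some (i, ℓ)) r) = pderiv (some (i, ℓ)) (evalAt N a0 r) := by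
  induction r using MvPolynomial.induction_on with
  | C c => rw [pderiv_C, map_zero, evalAt_C, pderiv_C]
  | add p q hp hq => simp only [map_add, hp, hq]
  | mul_X p w hp =>
      rw [pderiv_mul, map_add, map_mul, map_mul, map_mul, pderiv_mul, hp]
      have : evalAt N a0 (pderiv (some (i, ℓ)) (X w)) =
          pderiv (some (i, ℓ)) (evalAt N a0 (X w)) := by
        match w with
        | none =>
            rw [pderiv_X_of_ne (by simp), map_zero, evalAt_X_none,
              pderiv_X_of_ne (by simp)]
        | some (γ, m) =>
            rcases eq_or_ne (some (γ, m)) (some (i, ℓ) : Option (Fin N × ℤ)) with heq | hne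
            · injection heq with h'
              have h1 : γ = i := congrArg Prod.fst h'
              have h2 : m = ℓ := congrArg Prod.snd h'
              subst h1; subst h2
              rw [pderiv_X_self, map_one, evalAt_X_some, if_neg hℓ, pderiv_X_self]
            · rw [pderiv_X_of_ne hne, map_zero, evalAt_X_some]
              split
              · rw [pderiv_C]
              · rw [pderiv_X_of_ne hne]
      rw [this]

end EvalAt

-- ====== SubstAt machinery ======

section Subst

variable {a0 : Fin N → ℂ}

lemma substAt_unique {x y y' : KK N} (h1 : SubstAt N a0 x y) (h2 : SubstAt N a0 x y') :
    y = y' := by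
  obtain ⟨p, q, hq, hx1, hy1⟩ := h1
  obtain ⟨p', q', hq', hx1', hy1'⟩ := h2
  have hpq : p * q' = p' * q := by
    apply algInj N
    rw [map_mul, map_mul, ← hx1, ← hx1']
    ring
  have he : evalAt N a0 p * evalAt N a0 q' = evalAt N a0 p' * evalAt N a0 q := by
    rw [← map_mul, ← map_mul, hpq]
  have key : y * (algebraMap (RR N) (KK N) (evalAt N a0 q) *
      algebraMap (RR N) (KK N) (evalAt N a0 q')) =
      y' * (algebraMap (RR N) (KK N) (evalAt N a0 q) *
      algebraMap (RR N) (KK N) (evalAt N a0 q')) := by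
    calc y * (algebraMap (RR N) (KK N) (evalAt N a0 q) *
        algebraMap (RR N) (KK N) (evalAt N a0 q'))
        = (y * algebraMap (RR N) (KK N) (evalAt N a0 q)) *
          algebraMap (RR N) (KK N) (evalAt N a0 q') := by ring
      _ = algebraMap (RR N) (KK N) (evalAt N a0 p * evalAt N a0 q') := by
          rw [hy1, map_mul]
      _ = algebraMap (RR N) (KK N) (evalAt N a0 p' * evalAt N a0 q) := by rw [he]
      _ = (y' * algebraMap (RR N) (KK N) (evalAt N a0 q')) *
          algebraMap (RR N) (KK N) (evalAt N a0 q) := by rw [hy1', map_mul]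
      _ = y' * (algebraMap (RR N) (KK N) (evalAt N a0 q) *
          algebraMap (RR N) (KK N) (evalAt N a0 q')) := by ring
  exact mul_right_cancel₀ (by
    rw [← map_mul]
    exact alg_ne (mul_ne_zero hq hq')) key

lemma substAt_zero : SubstAt N a0 0 0 :=
  ⟨0, 1, by rw [map_one]; exact one_ne_zero, by simp, by simp⟩

lemma substAt_add {x y x' y' : KK N} (h : SubstAt N a0 x y) (h' : SubstAt N a0 x' y') :
    SubstAt N a0 (x + x') (y + y') := by
  obtain ⟨p, q, hq, hx1, hy1⟩ := h
  obtain ⟨p', q', hq', hx1', hy1'⟩ := h'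
  refine ⟨p * q' + p' * q, q * q', by rw [map_mul]; exact mul_ne_zero hq hq', ?_, ?_⟩
  · rw [map_add, map_mul, map_mul, map_mul, ← hx1, ← hx1']
    ring
  · simp only [map_mul, map_add]
    rw [← hy1, ← hy1']
    ring

lemma substAt_mul {x y x' y' : KK N} (h : SubstAt N a0 x y) (h' : SubstAt N a0 x' y') :
    SubstAt N a0 (x * x') (y * y') := by
  obtain ⟨p, q, hq, hx1, hy1⟩ := h
  obtain ⟨p', q', hq', hx1', hy1'⟩ := h'
  refine ⟨p * p', q * q', by rw [map_mul]; exact mul_ne_zero hq hq', ?_, ?_⟩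
  · rw [map_mul, map_mul, ← hx1, ← hx1']
    ring
  · simp only [map_mul]
    rw [← hy1, ← hy1']
    ring

lemma substAt_sum {ι : Type*} (s : Finset ι) (f g : ι → KK N)
    (h : ∀ i ∈ s, SubstAt N a0 (f i) (g i)) :
    SubstAt N a0 (∑ i ∈ s, f i) (∑ i ∈ s, g i) := by
  classical
  induction s using Finset.induction_on with
  | empty => simpa using substAt_zero
  | @insert i s his ih =>
      rw [Finset.sum_insert his, Finset.sum_insert his]
      exact substAt_add (h i (Finset.mem_insert_self i s))
        (ih fun j hj => h j (Finset.mem_insert_of_mem hj))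

lemma substAt_fixed {W : Set (Option (Fin N × ℤ))} (hW : ∀ w ∈ W, w ∉ L0 N) {x : KK N}
    (hx : x ∈ GG N W) : SubstAt N a0 x x := by
  obtain ⟨p, q, hq, hp1, hq1, hxe⟩ := hx
  refine ⟨p, q, ?_, hxe, ?_⟩
  · rw [evalAt_fixed a0 hW hq1]
    exact hq
  · rw [evalAt_fixed a0 hW hq1, evalAt_fixed a0 hW hp1]
    exact hxe

lemma derivQuot (v : Option (Fin N × ℤ)) (D : Derivation ℂ (KK N) (KK N))
    (hD : ∀ r : RR N, D (algebraMap (RR N) (KK N) r) = algebraMap (RR N) (KK N) (pderiv v r))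
    {x : KK N} {p q : RR N} (hxe : x * algebraMap (RR N) (KK N) q = algebraMap (RR N) (KK N) p) :
    D x * algebraMap (RR N) (KK N) (q * q) =
      algebraMap (RR N) (KK N) (pderiv v p * q - p * pderiv v q) := by
  have h1 := congrArg D hxe
  rw [Derivation.leibniz, hD, hD] at h1
  simp only [smul_eq_mul] at h1
  -- h1 : x * alg (pderiv v q) + alg q * D x = alg (pderiv v p)
  rw [map_mul, map_sub, map_mul, map_mul]
  calc D x * (algebraMap (RR N) (KK N) q * algebraMap (RR N) (KK N) q)
      = (x * algebraMap (RR N) (KK N) (pderiv v q) +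
          algebraMap (RR N) (KK N) q * D x) * algebraMap (RR N) (KK N) q
        - (x * algebraMap (RR N) (KK N) q) * algebraMap (RR N) (KK N) (pderiv v q) := by ring
    _ = algebraMap (RR N) (KK N) (pderiv v p) * algebraMap (RR N) (KK N) q
        - algebraMap (RR N) (KK N) p * algebraMap (RR N) (KK N) (pderiv v q) := by
        rw [h1, hxe]

lemma substAt_deriv {i : Fin N} {ℓ : ℤ} (hℓ : ℓ ≠ 0) (D : Derivation ℂ (KK N) (KK N))
    (hD : ∀ r : RR N, D (algebraMap (RR N) (KK N) r) =
      algebraMap (RR N) (KK N) (pderiv (some (i, ℓ)) r))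
    {x y : KK N} (h : SubstAt N a0 x y) : SubstAt N a0 (D x) (D y) := by
  obtain ⟨p, q, hq, hx1, hy1⟩ := h
  set v : Option (Fin N × ℤ) := some (i, ℓ)
  refine ⟨pderiv v p * q - p * pderiv v q, q * q, ?_, derivQuot v D hD hx1, ?_⟩
  · rw [map_mul]
    exact mul_ne_zero hq hq
  · have := derivQuot v D hD hy1
    have heq : evalAt N a0 (q * q) = evalAt N a0 q * evalAt N a0 q := map_mul _ _ _
    have hnum : evalAt N a0 (pderiv v p * q - p * pderiv v q) =
        pderiv v (evalAt N a0 p) * evalAt N a0 q -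
          evalAt N a0 p * pderiv v (evalAt N a0 q) := by
      rw [map_sub, map_mul, map_mul, evalAt_pderiv a0 hℓ, evalAt_pderiv a0 hℓ]
    rw [heq, hnum]
    exact this

/-- The value of a substitution of an element of `GG N U` lies in `GG N (U \ L0 N)`. -/
lemma substAt_value_mem {U : Set (Option (Fin N × ℤ))} {x y : KK N} (hx : x ∈ GG N U)
    (h : SubstAt N a0 x y) : y ∈ GG N (U \ L0 N) := by
  obtain ⟨P, Q, hQ, hP1, hQ1, hxe⟩ := hx
  obtain ⟨p, q, hq, hx1, hy1⟩ := h
  rcases eq_or_ne x 0 with rfl | hx0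
  · -- then p evaluates to something with y * (eq) = (ep) and alg p = 0 * alg q = 0
    have hp0 : p = 0 := by
      apply algInj N
      rw [← hx1, map_zero, zero_mul]
    have : y = 0 := by
      have := hy1
      rw [hp0, map_zero, map_zero] at this
      rcases mul_eq_zero.mp this with h | h
      · exact h
      · exact absurd h (alg_ne hq)
    rw [this]
    exact (GGf N (U \ L0 N)).zero_mem
  have hPne : P ≠ 0 := by
    rintro rfl
    rw [map_zero] at hxe
    rcases mul_eq_zero.mp hxe with h | h
    · exact hx0 h
    · exact absurd h (alg_ne hQ)
  obtain ⟨P₁, Q₁, g, rel, hPg, hQg⟩ := UniqueFactorizationMonoid.exists_reduced_factors' P Q hQ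
  have hg : g ≠ 0 := fun h0 => hQ (by rw [← hQg, h0, zero_mul])
  have hQ₁ : Q₁ ≠ 0 := fun h0 => hQ (by rw [← hQg, h0, mul_zero])
  have hP₁s : P₁ ∈ supported ℂ U := supported_of_dvd ⟨g, by rw [← hPg]; ring⟩ hPne hP1
  have hQ₁s : Q₁ ∈ supported ℂ U := supported_of_dvd ⟨g, by rw [← hQg]; ring⟩ hQ hQ1
  have hxe₁ : x * algebraMap (RR N) (KK N) Q₁ = algebraMap (RR N) (KK N) P₁ := by
    have h2 : (x * algebraMap (RR N) (KK N) Q₁) * algebraMap (RR N) (KK N) g =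
        algebraMap (RR N) (KK N) P₁ * algebraMap (RR N) (KK N) g := by
      calc (x * algebraMap (RR N) (KK N) Q₁) * algebraMap (RR N) (KK N) g
          = x * algebraMap (RR N) (KK N) (g * Q₁) := by rw [map_mul]; ring
        _ = algebraMap (RR N) (KK N) P := by rw [hQg]; exact hxe
        _ = algebraMap (RR N) (KK N) P₁ * algebraMap (RR N) (KK N) g := by
            rw [← hPg, map_mul]; ring
    exact mul_right_cancel₀ (alg_ne hg) h2
  -- Q₁ divides q
  have hPq : P₁ * q = p * Q₁ := by
    apply algInj N
    rw [map_mul, map_mul, ← hx1, ← hxe₁]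
    ring
  have hdvd : Q₁ ∣ q := by
    have h2 : Q₁ ∣ q * P₁ := ⟨p, by rw [mul_comm q P₁, hPq]; ring⟩
    exact rel.symm.dvd_of_dvd_mul_right h2
  obtain ⟨t, rfl⟩ := hdvd
  have heQ₁ : evalAt N a0 Q₁ ≠ 0 := by
    intro h0
    rw [map_mul, h0, zero_mul] at hq
    exact hq rfl
  -- the substituted value of x via the reduced representation
  set y' : KK N := algebraMap (RR N) (KK N) (evalAt N a0 P₁) *
    (algebraMap (RR N) (KK N) (evalAt N a0 Q₁))⁻¹ with hy'
  have hsub' : SubstAt N a0 x y' := by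
    refine ⟨P₁, Q₁, heQ₁, hxe₁, ?_⟩
    rw [hy', inv_mul_cancel_right₀ (alg_ne heQ₁)]
  have hyy : y = y' := substAt_unique ⟨p, Q₁ * t, hq, hx1, hy1⟩ hsub'
  rw [hyy, hy']
  have h1 : y' * algebraMap (RR N) (KK N) (evalAt N a0 Q₁) =
      algebraMap (RR N) (KK N) (evalAt N a0 P₁) := by
    rw [hy', inv_mul_cancel_right₀ (alg_ne heQ₁)]
  exact ⟨evalAt N a0 P₁, evalAt N a0 Q₁, heQ₁, evalAt_supported a0 hP₁s,
    evalAt_supported a0 hQ₁s, h1⟩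

end Subst

-- ====== derivations preserve GG; matrix helpers ======

lemma pderiv_supported {U : Set (Option (Fin N × ℤ))} (v : Option (Fin N × ℤ)) {r : RR N}
    (hr : r ∈ supported ℂ U) : pderiv v r ∈ supported ℂ U := by
  rw [supported_eq_adjoin_X] at hr
  induction hr using Algebra.adjoin_induction with
  | mem x hx =>
      obtain ⟨w, hw, rfl⟩ := hx
      rcases eq_or_ne w v with rfl | hwv
      · rw [pderiv_X_self]; exact Subalgebra.one_mem _
      · rw [pderiv_X_of_ne hwv]; exact Subalgebra.zero_mem _
  | algebraMap c =>
      have h1 : (algebraMap ℂ (RR N)) c = C c := by rw [MvPolynomial.algebraMap_eq]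
      rw [h1, pderiv_C]; exact Subalgebra.zero_mem _
  | add x y hx' hy' hx hy => rw [map_add]; exact add_mem hx hy
  | mul x y hx' hy' hx hy =>
      rw [pderiv_mul]
      refine add_mem (mul_mem hx ?_) (mul_mem ?_ hy)
      · rw [supported_eq_adjoin_X]; exact hy'
      · rw [supported_eq_adjoin_X]; exact hx'

lemma derivMem {U : Set (Option (Fin N × ℤ))} (v : Option (Fin N × ℤ))
    (D : Derivation ℂ (KK N) (KK N))
    (hD : ∀ r : RR N, D (algebraMap (RR N) (KK N) r) = algebraMap (RR N) (KK N) (pderiv v r))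
    {x : KK N} (hx : x ∈ GG N U) : D x ∈ GG N U := by
  obtain ⟨p, q, hq, hp1, hq1, hxe⟩ := hx
  exact ⟨pderiv v p * q - p * pderiv v q, q * q, mul_ne_zero hq hq,
    sub_mem (mul_mem (pderiv_supported v hp1) hq1) (mul_mem hp1 (pderiv_supported v hq1)),
    mul_mem hq1 hq1, derivQuot v D hD hxe⟩

lemma det_mem {d : ℕ} (F : Subfield (KK N)) (A : Matrix (Fin d) (Fin d) (KK N))
    (hA : ∀ i j, A i j ∈ F) : A.det ∈ F := by
  classical
  rw [Matrix.det_apply]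
  refine sum_mem fun σ _ => ?_
  rw [Units.smul_def]
  exact zsmul_mem (prod_mem fun i _ => hA _ _) _

lemma inv_entry_mem {d : ℕ} (F : Subfield (KK N)) (A : Matrix (Fin d) (Fin d) (KK N))
    (hA : ∀ i j, A i j ∈ F) (i j : Fin d) : A⁻¹ i j ∈ F := by
  classical
  rw [Matrix.inv_def, Matrix.smul_apply, smul_eq_mul]
  refine mul_mem ?_ ?_
  · rw [Ring.inverse_eq_inv']
    exact inv_mem (det_mem F A hA)
  · rw [Matrix.adjugate_apply]
    refine det_mem F _ fun i' j' => ?_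
    rw [Matrix.updateRow_apply]
    split
    · rw [Pi.single_apply]
      split
      · exact F.one_mem
      · exact F.zero_mem
    · exact hA _ _

lemma mul_entry_mem {d : ℕ} (F : Subfield (KK N)) (A B : Matrix (Fin d) (Fin d) (KK N))
    (hA : ∀ i j, A i j ∈ F) (hB : ∀ i j, B i j ∈ F) (i j : Fin d) : (A * B) i j ∈ F := by
  rw [Matrix.mul_apply]
  exact sum_mem fun k _ => mul_mem (hA i k) (hB k j)

lemma derivMatMul {d : ℕ} (D : Derivation ℂ (KK N) (KK N))
    (A B : Matrix (Fin d) (Fin d) (KK N)) :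
    (A * B).map ⇑D = A.map ⇑D * B + A * B.map ⇑D := by
  ext i j
  rw [Matrix.map_apply, Matrix.mul_apply, map_sum, Matrix.add_apply, Matrix.mul_apply,
    Matrix.mul_apply, ← Finset.sum_add_distrib]
  congr 1
  ext k
  rw [Derivation.leibniz, Matrix.map_apply, Matrix.map_apply]
  simp only [smul_eq_mul]
  ring

lemma oneMapD {d : ℕ} (D : Derivation ℂ (KK N) (KK N)) :
    (1 : Matrix (Fin d) (Fin d) (KK N)).map ⇑D = 0 := by
  ext i j
  rw [Matrix.map_apply, Matrix.one_apply]
  split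
  · rw [Derivation.map_one_eq_zero]; rfl
  · rw [map_zero]; rfl

lemma h012_0 : ({0, 1, 2} : Set ℤ) \ {0} = ({1, 2} : Set ℤ) := by
  ext ℓ
  simp only [Set.mem_diff, Set.mem_insert_iff, Set.mem_singleton_iff]
  omega

lemma h012_2 : ({0, 1, 2} : Set ℤ) \ {2} = ({0, 1} : Set ℤ) := by
  ext ℓ
  simp only [Set.mem_diff, Set.mem_insert_iff, Set.mem_singleton_iff]
  omega

lemma Vs12_L0 : ∀ w ∈ Vs N {1, 2}, w ∉ L0 N := by
  rintro w hw
  match w with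
  | none => exact none_not_mem_L0
  | some (γ, ℓ) =>
      intro hc
      have h1 : ℓ ∈ ({1, 2} : Set ℤ) := some_mem_Vs.mp hw
      have h2 : ℓ = 0 := some_mem_L0.mp hc
      rcases h1 with h1 | h1
      · omega
      · simp only [Set.mem_singleton_iff] at h1; omega

lemma Vs_mono {s t : Set ℤ} (h : s ⊆ t) : Vs N s ⊆ Vs N t := by
  rintro w (h1 | ⟨γ, ℓ, hℓ, rfl⟩)
  · exact Or.inl h1
  · exact Or.inr ⟨γ, ℓ, h hℓ, rfl⟩

lemma L0_eq : L0 N = Lvl N 0 Finset.univ := rfl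

lemma sub12 : ({1, 2} : Set ℤ) ⊆ ({0, 1, 2} : Set ℤ) := by
  intro ℓ h
  simp only [Set.mem_insert_iff, Set.mem_singleton_iff] at h ⊢
  omega

end Stmt2Aux

open Stmt2Aux in
/-- first part of Theorem `thmuknew`: if the invertible matrix
`M = M(u_0,u_1,u_2,λ)` satisfies `∂/∂u^i_0(∂M/∂u^j_2 · M⁻¹) = 0` for all `i, j`,
and `Ma = M(a_0,u_1,u_2,λ)` (the substitution `u_0 := a_0`, assumed well defined
and invertible), then `M̃ = M(a_0,u_1,u_2,λ)⁻¹ · M(u_0,u_1,u_2,λ) · M(a_0,u_0,u_1,λ)`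
(where `M(a_0,u_0,u_1,λ) = S⁻¹(Ma)`) has entries that are rational functions of
`u_0, u_1, λ` only. -/
theorem statement2 (N d : ℕ) (hN : 0 < N) (hd : 0 < d)
    -- the partial derivatives `∂/∂u^i_ℓ`: the ℂ-derivations sending `u^i_ℓ ↦ 1`,
    -- all other variables and `λ` to `0`:
    (Pd : Fin N → ℤ → Derivation ℂ (KK N) (KK N))
    (hPdlam : ∀ i ℓ, Pd i ℓ (lam N) = 0)
    (hPdu : ∀ i ℓ γ m, Pd i ℓ (uu N γ m) = if γ = i ∧ m = ℓ then 1 else 0)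
    -- `M`, invertible, with entries rational in `u_0, u_1, u_2, λ` only:
    (M : Matrix (Fin d) (Fin d) (KK N))
    (hMdep : ∀ p q, M p q ∈ depOn N {0, 1, 2})
    (hMdet : M.det ≠ 0)
    -- condition (i):
    (hcond : ∀ i j : Fin N, (M.map ⇑(Pd j 2) * M⁻¹).map ⇑(Pd i 0) = 0)
    -- the substituted matrix `Ma = M(a_0,u_1,u_2,λ)`, well defined and invertible:
    (a0 : Fin N → ℂ) (Ma : Matrix (Fin d) (Fin d) (KK N))
    (hMa : ∀ p q, SubstAt N a0 (M p q) (Ma p q))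
    (hMadet : Ma.det ≠ 0) :
    ∀ p q, (Ma⁻¹ * M * Ma.map ⇑(Sz N (-1))) p q ∈ depOn N {0, 1} := by
  classical
  intro p q
  have hMdetu : IsUnit M.det := isUnit_iff_ne_zero.mpr hMdet
  have hMadetu : IsUnit Ma.det := isUnit_iff_ne_zero.mpr hMadet
  have hpd : ∀ (i : Fin N) (ℓ : ℤ) (r : RR N), Pd i ℓ (algebraMap (RR N) (KK N) r) =
      algebraMap (RR N) (KK N) (pderiv (some (i, ℓ)) r) := pdCompat Pd hPdlam hPdu
  have hMg : ∀ p' q', M p' q' ∈ GG N (Vs N {0, 1, 2}) :=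
    fun p' q' => depOn_le_GGf {0, 1, 2} (hMdep p' q')
  have hMinvg : ∀ p' q', M⁻¹ p' q' ∈ GG N (Vs N {0, 1, 2}) :=
    fun p' q' => inv_entry_mem (GGf N _) M hMg p' q'
  set Nm : Fin N → Matrix (Fin d) (Fin d) (KK N) :=
    fun j => M.map ⇑(Pd j 2) * M⁻¹ with hNm
  have hNg : ∀ j p' q', Nm j p' q' ∈ GG N (Vs N {0, 1, 2}) := by
    intro j p' q'
    refine mul_entry_mem (GGf N _) _ _ (fun i' j' => ?_) hMinvg p' q'
    rw [Matrix.map_apply]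
    exact derivMem (some (j, 2)) (Pd j 2) (hpd j 2) (hMg i' j')
  have hNker : ∀ (i j : Fin N) (p' q' : Fin d), Pd i 0 (Nm j p' q') = 0 := by
    intro i j p' q'
    have h1 : (Nm j).map ⇑(Pd i 0) p' q' = (0 : Matrix (Fin d) (Fin d) (KK N)) p' q' := by
      rw [hNm, hcond i j]
    simpa [Matrix.map_apply] using h1
  have hN12 : ∀ j p' q', Nm j p' q' ∈ GG N (Vs N {1, 2}) := by
    intro j p' q'
    have h1 := kernelIter Pd hPdlam hPdu 0 (hNg j p' q') (fun i => hNker i j p' q') Finset.univ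
    rwa [Vs_diff, h012_0] at h1
  have hMmap : ∀ j, M.map ⇑(Pd j 2) = Nm j * M := by
    intro j
    rw [hNm]
    exact (Matrix.nonsing_inv_mul_cancel_right M _ hMdetu).symm
  have hMamap : ∀ j, Ma.map ⇑(Pd j 2) = Nm j * Ma := by
    intro j
    ext p' q'
    have s1 : SubstAt N a0 (Pd j 2 (M p' q')) (Pd j 2 (Ma p' q')) :=
      substAt_deriv (by norm_num) (Pd j 2) (hpd j 2) (hMa p' q')
    have s2 : SubstAt N a0 (Pd j 2 (M p' q')) ((Nm j * Ma) p' q') := by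
      have h2 : (M.map ⇑(Pd j 2)) p' q' = (Nm j * M) p' q' := by rw [hMmap j]
      rw [Matrix.map_apply, Matrix.mul_apply] at h2
      rw [h2, Matrix.mul_apply]
      exact substAt_sum _ _ _ fun k _ =>
        substAt_mul (substAt_fixed Vs12_L0 (hN12 j p' k)) (hMa k q')
    rw [Matrix.map_apply]
    exact substAt_unique s1 s2
  have hMa12 : ∀ p' q', Ma p' q' ∈ GG N (Vs N {1, 2}) := by
    intro p' q'
    have h1 := substAt_value_mem (hMg p' q') (hMa p' q')
    rwa [L0_eq, Vs_diff, h012_0] at h1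
  have hMainvg12 : ∀ p' q', Ma⁻¹ p' q' ∈ GG N (Vs N {1, 2}) :=
    fun p' q' => inv_entry_mem (GGf N _) Ma hMa12 p' q'
  have hMainvmap : ∀ j, (Ma⁻¹).map ⇑(Pd j 2) = -(Ma⁻¹ * (Nm j * Ma) * Ma⁻¹) := by
    intro j
    have h1 : (Ma⁻¹ * Ma).map ⇑(Pd j 2) = 0 := by
      rw [Matrix.nonsing_inv_mul _ hMadetu, oneMapD]
    rw [derivMatMul] at h1
    have h2 : (Ma⁻¹).map ⇑(Pd j 2) * Ma = -(Ma⁻¹ * Ma.map ⇑(Pd j 2)) :=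
      eq_neg_of_add_eq_zero_left h1
    have h3 := congrArg (fun X => X * Ma⁻¹) h2
    rw [Matrix.mul_nonsing_inv_cancel_right Ma _ hMadetu] at h3
    rw [h3, hMamap j, Matrix.neg_mul]
  have hBker : ∀ (j : Fin N) (p' q' : Fin d), Pd j 2 ((Ma⁻¹ * M) p' q') = 0 := by
    intro j p' q'
    have h1 : (Ma⁻¹ * M).map ⇑(Pd j 2) = 0 := by
      rw [derivMatMul, hMainvmap j, hMmap j]
      have e1 : Ma⁻¹ * (Nm j * Ma) * Ma⁻¹ = Ma⁻¹ * Nm j := by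
        rw [← Matrix.mul_assoc, Matrix.mul_nonsing_inv_cancel_right Ma _ hMadetu]
      rw [e1, Matrix.neg_mul, Matrix.mul_assoc]
      exact neg_add_cancel _
    have h2 : (Ma⁻¹ * M).map ⇑(Pd j 2) p' q' = (0 : Matrix (Fin d) (Fin d) (KK N)) p' q' := by
      rw [h1]
    simpa [Matrix.map_apply] using h2
  have hBg : ∀ p' q', (Ma⁻¹ * M) p' q' ∈ GG N (Vs N {0, 1, 2}) :=
    fun p' q' => mul_entry_mem (GGf N _) _ _
      (fun i' j' => GG_mono (Vs_mono sub12) (hMainvg12 i' j')) hMg p' q'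
  have hB01 : ∀ p' q', (Ma⁻¹ * M) p' q' ∈ GG N (Vs N {0, 1}) := by
    intro p' q'
    have h1 := kernelIter Pd hPdlam hPdu 2 (hBg p' q') (fun i => hBker i p' q') Finset.univ
    rwa [Vs_diff, h012_2] at h1
  have hfin : (Ma⁻¹ * M * Ma.map ⇑(Sz N (-1))) p q ∈ GGf N (Vs N {0, 1}) := by
    rw [Matrix.mul_apply]
    refine sum_mem fun k _ => mul_mem (hB01 p k) ?_
    rw [Matrix.map_apply]
    exact Sz_neg_one_mem_GG (hMa12 k q)
  exact GG_le_depOn hfin
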